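/- For the qubit SIC-POVM with Bloch vectors a_1 = (0,0,1), a_2 = (√8/3, 0, -1/3), a_3 = (-√2/3, √6/3, -1/3), a_4 = (-√2/3, -√6/3, -1/3) and weights p_i = 1/2, the function f(x) = Σ_i (1/2) Θ(x·a_i) satisfies f(x) ≤ 1 for every x ∈ R^3 with |x| ≤ √3. -/

import Mathlib

open RealInnerProductSpace

/-- The four Bloch vectors of the qubit SIC-POVM (regular tetrahedron vertices). -/
noncomputable def sicVec : Fin 4 → EuclideanSpace ℝ (Fin 3)
  | 0 => !₂[0, 0, 1]
  | 1 => !₂[Real.sqrt 8 / 3, 0, -1 / 3]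
  | 2 => !₂[-Real.sqrt 2 / 3, Real.sqrt 6 / 3, -1 / 3]
  | 3 => !₂[-Real.sqrt 2 / 3, -Real.sqrt 6 / 3, -1 / 3]

lemma sic_gram (i j : Fin 4) :
    ⟪sicVec i, sicVec j⟫ = if i = j then (1 : ℝ) else -1/3 := by
  have h2 : Real.sqrt 2 * Real.sqrt 2 = 2 := Real.mul_self_sqrt (by norm_num)
  have h6 : Real.sqrt 6 * Real.sqrt 6 = 6 := Real.mul_self_sqrt (by norm_num)
  have h8 : Real.sqrt 8 * Real.sqrt 8 = 8 := Real.mul_self_sqrt (by norm_num)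
  have h82 : Real.sqrt 8 * Real.sqrt 2 = 4 := by
    rw [← Real.sqrt_mul (by norm_num)]
    norm_num
  fin_cases i <;> fin_cases j <;>
    simp [sicVec, PiLp.inner_apply, Fin.sum_univ_three, -inner_self_eq_norm_sq_to_K] <;>
    nlinarith [h2, h6, h8, h82]

theorem sic_f_le_one (x : EuclideanSpace ℝ (Fin 3)) (hx : ‖x‖ ≤ Real.sqrt 3) :
    ∑ i : Fin 4, (1 / 2 : ℝ) * max ⟪x, sicVec i⟫ 0 ≤ 1 := by
  set S : Finset (Fin 4) := Finset.univ.filter (fun i => 0 ≤ ⟪x, sicVec i⟫) with hS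
  set b : EuclideanSpace ℝ (Fin 3) := ∑ i ∈ S, sicVec i with hb
  have hsum : ∑ i : Fin 4, max ⟪x, sicVec i⟫ 0 = ⟪x, b⟫ := by
    rw [hb, inner_sum, hS, Finset.sum_filter]
    apply Finset.sum_congr rfl
    intro i _
    rcases le_or_gt 0 ⟪x, sicVec i⟫ with h | h
    · rw [max_eq_left h, if_pos h]
    · rw [max_eq_right h.le, if_neg (not_le.mpr h)]
  have hcard : (S.card : ℝ) ≤ 4 := by
    have h := Finset.card_le_univ S
    simp at h
    exact_mod_cast le_trans (Nat.cast_le.mpr h) (by norm_num)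
  have hb2 : ‖b‖ ^ 2 ≤ 4 / 3 := by
    have h0 : ‖b‖ ^ 2 = ⟪b, b⟫ := (real_inner_self_eq_norm_sq b).symm
    rw [h0, hb, sum_inner]
    simp_rw [inner_sum, sic_gram]
    have key : ∀ i ∈ S, (∑ j ∈ S, if i = j then (1:ℝ) else -1/3)
        = 4/3 - (S.card : ℝ)/3 := by
      intro i hi
      have hsplit : ∀ j, (if i = j then (1:ℝ) else -1/3)
          = (if i = j then (4/3 : ℝ) else 0) + (-1/3) := by
        intro j; split <;> norm_num
      simp_rw [hsplit]
      rw [Finset.sum_add_distrib, Finset.sum_ite_eq S i (fun _ => (4/3:ℝ)),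
        Finset.sum_const, nsmul_eq_mul]
      simp [hi]
      ring
    rw [Finset.sum_congr rfl key, Finset.sum_const, nsmul_eq_mul]
    nlinarith [(Nat.cast_nonneg S.card : (0:ℝ) ≤ S.card), sq_nonneg ((S.card : ℝ) - 2)]
  have hxb : ⟪x, b⟫ ≤ 2 := by
    have h1 : ⟪x, b⟫ ≤ ‖x‖ * ‖b‖ := real_inner_le_norm x b
    have h3 : Real.sqrt 3 ^ 2 = 3 := Real.sq_sqrt (by norm_num)
    have hx2 : ‖x‖ ^ 2 ≤ 3 := by nlinarith [Real.sqrt_nonneg 3, norm_nonneg x]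
    have hw2 : (‖x‖ * ‖b‖) ^ 2 ≤ 4 := by
      nlinarith [sq_nonneg ‖b‖, sq_nonneg ‖x‖]
    have hw : ‖x‖ * ‖b‖ ≤ 2 := by
      nlinarith [mul_nonneg (norm_nonneg x) (norm_nonneg b)]
    linarith
  calc ∑ i : Fin 4, (1 / 2 : ℝ) * max ⟪x, sicVec i⟫ 0
      = (1/2) * ∑ i : Fin 4, max ⟪x, sicVec i⟫ 0 := by rw [Finset.mul_sum]
    _ = (1/2) * ⟪x, b⟫ := by rw [hsum]
    _ ≤ 1 := by linarith
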